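/- If q ≡ 1 (mod n) then there is no permutation polynomial of F_q of degree n. -/
import Mathlib

open Polynomial Finset

theorem no_pp_of_card_modCast_one {F : Type*} [Field F] [Fintype F]
    (n : ℕ) (hn : 2 ≤ n) (hq : Fintype.card F % n = 1)
    (f : F[X]) (hdeg : f.natDegree = n) :
    ¬ Function.Bijective (fun c : F => f.eval c) := by
  classical
  intro hbij
  set q := Fintype.card F with hqdef
  have hq1 : 1 < q := Fintype.one_lt_card
  have hdvd : n ∣ q - 1 := by
    have := Nat.div_add_mod q n
    exact ⟨q / n, by omega⟩
  set m := (q - 1) / n with hmdef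
  have hnm : n * m = q - 1 := Nat.mul_div_cancel' hdvd
  have hm1 : 1 ≤ m := Nat.one_le_iff_ne_zero.mpr (fun h => by
    rw [h, mul_zero] at hnm; omega)
  have hmlt : m < q - 1 := by nlinarith
  -- the value-sum of f^m
  have hf0 : f ≠ 0 := fun h => by simp [h] at hdeg; omega
  have hpdeg : (f ^ m).natDegree = q - 1 := by
    rw [natDegree_pow, hdeg, mul_comm, hnm]
  have hcoeff : (f ^ m).coeff (q - 1) = f.leadingCoeff ^ m := by
    rw [← hpdeg, coeff_natDegree, leadingCoeff_pow]
  have hcne : (f ^ m).coeff (q - 1) ≠ 0 := by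
    rw [hcoeff]
    exact pow_ne_zero _ (leadingCoeff_ne_zero.mpr hf0)
  have hsumtop : ∑ x : F, x ^ (q - 1) = -1 := by
    calc ∑ x : F, x ^ (q - 1) = ∑ x : F, (if x = 0 then 0 else 1 : F) := by
          refine Finset.sum_congr rfl fun x _ => ?_
          split_ifs with h
          · simp [h, zero_pow (by omega : q - 1 ≠ 0)]
          · exact FiniteField.pow_card_sub_one_eq_one x h
      _ = ((q - 1 : ℕ) : F) := by
          rw [Finset.sum_ite, Finset.sum_const, Finset.sum_const, smul_zero, zero_add,
            nsmul_eq_mul, mul_one]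
          congr 1
          rw [Finset.filter_ne', Finset.card_erase_of_mem (Finset.mem_univ _), card_univ]
      _ = -1 := by
          rw [Nat.cast_sub (by omega), FiniteField.cast_card_eq_zero, Nat.cast_one, zero_sub]
  have hsumeval : ∑ c : F, (f ^ m).eval c = -(f ^ m).coeff (q - 1) := by
    have : ∀ c : F, (f ^ m).eval c = ∑ i ∈ range ((q - 1) + 1), (f ^ m).coeff i * c ^ i := by
      intro c
      rw [eval_eq_sum_range, hpdeg]
    rw [Finset.sum_congr rfl fun c _ => this c, Finset.sum_comm]
    rw [Finset.sum_range_succ]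
    have hz : ∀ i ∈ range (q - 1), ∑ c : F, (f ^ m).coeff i * c ^ i = 0 := by
      intro i hi
      rw [← Finset.mul_sum, FiniteField.sum_pow_lt_card_sub_one _ _ (Finset.mem_range.mp hi),
        mul_zero]
    rw [Finset.sum_eq_zero hz, zero_add, ← Finset.mul_sum, hsumtop, mul_neg_one]
  -- bijectivity gives the contradiction
  have hcomp : ∑ c : F, (f.eval c) ^ m = ∑ c : F, c ^ m :=
    hbij.sum_comp (fun x => x ^ m)
  have hLHS : ∑ c : F, (f.eval c) ^ m = ∑ c : F, (f ^ m).eval c := by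
    simp [eval_pow]
  have hRHS : ∑ c : F, c ^ m = 0 := FiniteField.sum_pow_lt_card_sub_one _ _ hmlt
  rw [hLHS, hsumeval, hRHS] at hcomp
  exact hcne (neg_eq_zero.mp hcomp)
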